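/- With the trumpet setup below, for every real α and every r with 0 < r ≤ r₀ one has u_α(r) > α + r^((2−n)/2). -/

import Mathlib

open MeasureTheory

noncomputable def u1' (n : ℕ) (s : ℝ) : ℝ := ((2 - (n : ℝ)) / 2) * s ^ (-(n : ℝ) / 2)

noncomputable def u2' (n : ℕ) (s : ℝ) : ℝ := (2 - (n : ℝ)) * s ^ (1 - (n : ℝ))

noncomputable def w (n : ℕ) (ζ : ℝ → ℝ) (s : ℝ) : ℝ :=
  ζ s * u1' n s + (1 - ζ s) * u2' n s

noncomputable def uA (n : ℕ) (ζ : ℝ → ℝ) (r₀ α r : ℝ) : ℝ :=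
  α + r₀ ^ ((2 - (n : ℝ)) / 2) - ∫ s in Set.Ioi r, w n ζ s

theorem stmt_13 (n : ℕ) (hn : 3 ≤ n) (r₀ : ℝ) (hr₀ : 0 < r₀)
    (hr₀2 : 2 * r₀ < (2 : ℝ) ^ ((2 : ℝ) / ((n : ℝ) - 2)))
    (ζ : ℝ → ℝ) (hζC : ContDiff ℝ 1 ζ) (hζ01 : ∀ r : ℝ, 0 ≤ ζ r ∧ ζ r ≤ 1)
    (hζone : ∀ r : ℝ, r ≤ r₀ → ζ r = 1) (hζzero : ∀ r : ℝ, 2 * r₀ ≤ r → ζ r = 0)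
    (hζder : ∀ r : ℝ, deriv ζ r ≤ 0)
    (α : ℝ) (r : ℝ) (hr0 : 0 < r) (hr : r ≤ r₀) :
    uA n ζ r₀ α r > α + r ^ ((2 - (n : ℝ)) / 2) := by
  have hn3 : (3 : ℝ) ≤ (n : ℝ) := by exact_mod_cast hn
  set c : ℝ := 2 * r₀ with hc
  have hc0 : 0 < c := by positivity
  have hrc : r < c := by simp only [hc]; linarith
  have ha1 : -(n : ℝ) / 2 < -1 := by linarith
  have ha2 : (1 : ℝ) - (n : ℝ) < -1 := by linarith
  have he : ((2 : ℝ) - n) / 2 ≠ 0 := by intro h; nlinarith [h]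
  have hne : (2 : ℝ) - n ≠ 0 := by intro h; nlinarith [h]
  -- integrability of u1', u2'
  have hi1 : ∀ x : ℝ, 0 < x → IntegrableOn (u1' n) (Set.Ioi x) := by
    intro x hx
    exact
      (integrableOn_Ioi_rpow_of_lt ha1 hx).const_mul ((2 - (n : ℝ)) / 2)
  have hi2 : ∀ x : ℝ, 0 < x → IntegrableOn (u2' n) (Set.Ioi x) := by
    intro x hx
    exact
      (integrableOn_Ioi_rpow_of_lt ha2 hx).const_mul (2 - (n : ℝ))
  -- integral formulas
  have hI1 : ∀ x : ℝ, 0 < x →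
      (∫ s in Set.Ioi x, u1' n s) = -x ^ ((2 - (n : ℝ)) / 2) := by
    intro x hx
    have h := integral_Ioi_rpow_of_lt ha1 hx
    have heq : -(n : ℝ) / 2 + 1 = (2 - (n : ℝ)) / 2 := by ring
    rw [heq] at h
    simp only [u1', MeasureTheory.integral_const_mul, h]
    field_simp
  have hI2 : (∫ s in Set.Ioi c, u2' n s) = -c ^ (2 - (n : ℝ)) := by
    have h := integral_Ioi_rpow_of_lt ha2 hc0
    have heq : (1 : ℝ) - (n : ℝ) + 1 = 2 - (n : ℝ) := by ring
    rw [heq] at h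
    simp only [u2', MeasureTheory.integral_const_mul, h]
    field_simp
  -- pointwise: u2' ≤ u1' on Ioc r c
  have hkey : ∀ s ∈ Set.Ioc r c, u2' n s ≤ u1' n s := by
    intro s hs
    have hs0 : 0 < s := hr0.trans hs.1
    have hsc : s < (2 : ℝ) ^ ((2 : ℝ) / ((n : ℝ) - 2)) := lt_of_le_of_lt hs.2 hr₀2
    have hp : 0 < ((n : ℝ) - 2) / 2 := by linarith
    have h1 : s ^ (((n : ℝ) - 2) / 2) < 2 := by
      calc s ^ (((n : ℝ) - 2) / 2)
          < ((2 : ℝ) ^ ((2 : ℝ) / ((n : ℝ) - 2))) ^ (((n : ℝ) - 2) / 2) :=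
            Real.rpow_lt_rpow hs0.le hsc hp
        _ = 2 := by
            rw [← Real.rpow_mul (by norm_num : (0:ℝ) ≤ 2)]
            have hne2 : (n : ℝ) - 2 ≠ 0 := by intro h; nlinarith [h]
            have : (2 : ℝ) / ((n : ℝ) - 2) * (((n : ℝ) - 2) / 2) = 1 := by
              field_simp
            rw [this, Real.rpow_one]
    have hpos : 0 < s ^ (((n : ℝ) - 2) / 2) := Real.rpow_pos_of_pos hs0 _
    have h2 : (1 : ℝ) / 2 < s ^ (1 - (n : ℝ) / 2) := by
      have heq : s ^ (1 - (n : ℝ) / 2) = (s ^ (((n : ℝ) - 2) / 2))⁻¹ := by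
        rw [← Real.rpow_neg hs0.le]; ring_nf
      rw [heq, one_div]
      exact (inv_lt_inv₀ (by norm_num) hpos).mpr h1
    have hsplit : s ^ (1 - (n : ℝ)) = s ^ (1 - (n : ℝ) / 2) * s ^ (-(n : ℝ) / 2) := by
      rw [← Real.rpow_add hs0]; ring_nf
    have hB : 0 < s ^ (-(n : ℝ) / 2) := Real.rpow_pos_of_pos hs0 _
    simp only [u1', u2', hsplit]
    nlinarith [mul_pos hB (sub_pos.mpr h2), mul_pos hB hpos]
  -- pointwise: w ≤ u1' on Ioc r c
  have hw_le : ∀ s ∈ Set.Ioc r c, w n ζ s ≤ u1' n s := by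
    intro s hs
    have h01 := hζ01 s
    have hk := hkey s hs
    have h1ζ : 0 ≤ 1 - ζ s := by linarith [h01.2]
    simp only [w]
    nlinarith [mul_le_mul_of_nonneg_left hk h1ζ]
  -- integrability of w
  have hiw : ∀ x : ℝ, 0 < x → IntegrableOn (w n ζ) (Set.Ioi x) := by
    intro x hx
    apply Integrable.add
    · exact (hi1 x hx).bdd_mul hζC.continuous.aestronglyMeasurable.restrict
        (c := 1) (ae_of_all _ fun s => by
          rw [Real.norm_eq_abs, abs_le]; exact ⟨by linarith [(hζ01 s).1], (hζ01 s).2⟩)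
    · exact (hi2 x hx).bdd_mul ((continuous_const.sub hζC.continuous).aestronglyMeasurable.restrict)
        (c := 1) (ae_of_all _ fun s => by
          rw [Real.norm_eq_abs, abs_le]
          exact ⟨by linarith [(hζ01 s).2], by linarith [(hζ01 s).1]⟩)
  have hwIoc : IntegrableOn (w n ζ) (Set.Ioc r c) :=
    (hiw r hr0).mono_set Set.Ioc_subset_Ioi_self
  have hwIoi : IntegrableOn (w n ζ) (Set.Ioi c) := hiw c hc0
  have hu1Ioc : IntegrableOn (u1' n) (Set.Ioc r c) :=
    (hi1 r hr0).mono_set Set.Ioc_subset_Ioi_self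
  have hdisj : Disjoint (Set.Ioc r c) (Set.Ioi c) := by
    rw [Set.disjoint_left]
    rintro s ⟨_, h1⟩ h2
    exact absurd h1 (not_le.mpr h2)
  have hunion : Set.Ioc r c ∪ Set.Ioi c = Set.Ioi r := Set.Ioc_union_Ioi_eq_Ioi hrc.le
  -- split the integral of w
  have hsplitw : (∫ s in Set.Ioi r, w n ζ s)
      = (∫ s in Set.Ioc r c, w n ζ s) + ∫ s in Set.Ioi c, w n ζ s := by
    rw [← setIntegral_union hdisj measurableSet_Ioi hwIoc hwIoi, hunion]
  -- tail integral of w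
  have htail : (∫ s in Set.Ioi c, w n ζ s) = -c ^ (2 - (n : ℝ)) := by
    rw [← hI2]
    apply setIntegral_congr_fun measurableSet_Ioi
    intro s hs
    have : ζ s = 0 := hζzero s (le_of_lt hs)
    simp [w, this]
  -- middle integral bound
  have hmid : (∫ s in Set.Ioc r c, w n ζ s) ≤ ∫ s in Set.Ioc r c, u1' n s :=
    setIntegral_mono_on hwIoc hu1Ioc measurableSet_Ioc hw_le
  -- compute middle integral of u1'
  have hmidval : (∫ s in Set.Ioc r c, u1' n s)
      = c ^ ((2 - (n : ℝ)) / 2) - r ^ ((2 - (n : ℝ)) / 2) := by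
    have h := setIntegral_union hdisj measurableSet_Ioi hu1Ioc (hi1 c hc0)
    rw [hunion, hI1 r hr0, hI1 c hc0] at h
    linarith
  -- final estimates
  have hcr : c ^ ((2 - (n : ℝ)) / 2) < r₀ ^ ((2 - (n : ℝ)) / 2) := by
    apply Real.rpow_lt_rpow_of_neg hr₀ (by simp only [hc]; linarith)
    have : ((2 : ℝ) - n) / 2 < 0 := by linarith
    exact this
  have hcpos : 0 < c ^ (2 - (n : ℝ)) := Real.rpow_pos_of_pos hc0 _
  have hbound : (∫ s in Set.Ioi r, w n ζ s)
      ≤ c ^ ((2 - (n : ℝ)) / 2) - r ^ ((2 - (n : ℝ)) / 2) - c ^ (2 - (n : ℝ)) := by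
    rw [hsplitw, htail]
    linarith [hmid.trans_eq hmidval]
  simp only [uA, gt_iff_lt]
  linarith
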